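/- Stereographic projection π: S^{j+k+1} \ {(0,…,0,1)} → ℝ^{j+k+1}, π(x', x_{j+k+2}) = x'/(1 − x_{j+k+2}), maps the product S^j(r₁) × S^k(r₂) ⊂ S^{j+k+1} ⊂ ℝ^{j+1} × ℝ^{k+1} (with r₁² + r₂² = 1 and the base point (0,…,0,1) lying in {0} × ℝ^{k+1}) onto the anchor ring T^{j,k}_{R,r} = {((R + rw)y, rv) : y ∈ S^j, (v,w) ∈ S^k ⊂ ℝ^k × ℝ}, with R = 1/r₁ and r = r₂/r₁. -/

import Mathlib

/-- Stereographic projection `π(x', x_last) = x'/(1 − x_last)` from the base point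
`(0, (0,1))` maps the product `S^j(r₁) × S^k(r₂)` (with `r₁² + r₂² = 1`, points written
as `(y', (v', w))` with `‖y'‖ = r₁` and `‖v'‖² + w² = r₂²`) onto the anchor ring
`T^{j,k}_{R,r} = {((R + r w₀)·y, r·v) : ‖y‖ = 1, ‖v‖² + w₀² = 1}` with `R = 1/r₁`,
`r = r₂/r₁`. -/
theorem stmt_16 {E F : Type*} [NormedAddCommGroup E] [NormedSpace ℝ E]
    [NormedAddCommGroup F] [NormedSpace ℝ F]
    (r₁ r₂ : ℝ) (h₁ : 0 < r₁) (h₂ : 0 < r₂) (h : r₁^2 + r₂^2 = 1) :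
    {p : E × F | ∃ (y' : E) (v' : F) (w : ℝ), ‖y'‖ = r₁ ∧ ‖v'‖^2 + w^2 = r₂^2 ∧
        p = ((1 - w)⁻¹ • y', (1 - w)⁻¹ • v')} =
    {p : E × F | ∃ (y : E) (v : F) (w₀ : ℝ), ‖y‖ = 1 ∧ ‖v‖^2 + w₀^2 = 1 ∧
        p = ((1/r₁ + (r₂/r₁) * w₀) • y, (r₂/r₁) • v)} := by
  have hr₂lt1 : r₂ < 1 := by nlinarith
  ext p
  simp only [Set.mem_setOf_eq]
  constructor
  · rintro ⟨y', v', w, hy, hvw, rfl⟩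
    have hw2 : w^2 ≤ r₂^2 := by nlinarith [sq_nonneg ‖v'‖]
    have hw1 : w < 1 := by nlinarith
    have h1w : (0:ℝ) < 1 - w := by linarith
    have hne : (1:ℝ) - w ≠ 0 := ne_of_gt h1w
    refine ⟨r₁⁻¹ • y', (r₁/(r₂*(1-w))) • v', (w - r₂^2)/(r₂*(1-w)), ?_, ?_, ?_⟩
    · rw [norm_smul, hy, Real.norm_eq_abs, abs_of_pos (by positivity)]
      field_simp
    · rw [norm_smul, mul_pow, Real.norm_eq_abs, sq_abs]
      have hv2 : ‖v'‖^2 = r₂^2 - w^2 := by linarith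
      rw [hv2]
      field_simp
      ring_nf
      linear_combination (r₂^2 - w^2) * h
    · have e1 : (1/r₁ + (r₂/r₁) * ((w - r₂^2)/(r₂*(1-w)))) * r₁⁻¹ = (1-w)⁻¹ := by
        field_simp
        ring_nf
        linear_combination (-1) * h
      have e2 : (r₂/r₁) * (r₁/(r₂*(1-w))) = (1-w)⁻¹ := by
        field_simp
      refine Prod.ext ?_ ?_ <;> simp only [smul_smul, e1, e2]
  · rintro ⟨y, v, w₀, hy, hvw, rfl⟩
    have hw₀ : w₀^2 ≤ 1 := by nlinarith [sq_nonneg ‖v‖]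
    have hw₀1 : -1 ≤ w₀ := by nlinarith
    have hpos : (0:ℝ) < 1 + r₂ * w₀ := by nlinarith
    have hne : (1:ℝ) + r₂ * w₀ ≠ 0 := ne_of_gt hpos
    refine ⟨r₁ • y, (r₁*r₂/(1+r₂*w₀)) • v, r₂*(r₂+w₀)/(1+r₂*w₀), ?_, ?_, ?_⟩
    · rw [norm_smul, hy, Real.norm_eq_abs, abs_of_pos h₁, mul_one]
    · rw [norm_smul, mul_pow, Real.norm_eq_abs, sq_abs]
      have hv2 : ‖v‖^2 = 1 - w₀^2 := by linarith
      rw [hv2]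
      field_simp
      ring_nf
      linear_combination (1 - w₀^2) * h
    · have h1w : (1:ℝ) - r₂*(r₂+w₀)/(1+r₂*w₀) = r₁^2/(1+r₂*w₀) := by
        field_simp
        linear_combination -h
      have e1 : (r₁^2/(1+r₂*w₀))⁻¹ * r₁ = 1/r₁ + (r₂/r₁) * w₀ := by
        field_simp
      have e2 : (r₁^2/(1+r₂*w₀))⁻¹ * (r₁*r₂/(1+r₂*w₀)) = r₂/r₁ := by
        field_simp
      refine Prod.ext ?_ ?_ <;> simp only [smul_smul, h1w, e1, e2]
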